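/- arXiv:2511.19262 — 2 statements merged into one kernel-verified Lean document; each statement's English description precedes it below -/
import Mathlib

section
/- Let T be a finite nonempty set partitioned into families {F_k}_{k∈K}, let C > 0 and weights w_k ≥ 0 satisfy w_k/|F_k| ≤ C/|T| for every k, let L > 0 and let ψ_t : [0,1] → ℝ be L-Lipschitz for each t ∈ T. Let n ≥ 1 and let (q_{t,i})_{t∈T, 1≤i≤n} be independent random variables with values in [0,1]. Define Φ̂ = Σ_k (w_k/|F_k|) Σ_{t∈F_k} (1/n) Σ_{i=1}^n ψ_t(q_{t,i}). Then for every ε > 0, P(|Φ̂ − E[Φ̂]| ≥ ε) ≤ 2·exp(−2·n·|T|·ε² / (C·L)²). -/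
open MeasureTheory Finset ProbabilityTheory Real

/-- The family `F_k ⊆ T` of tasks assigned to family index `k`. -/
def famSet {T K : Type*} [Fintype T] [DecidableEq K] (fam : T → K) (k : K) : Finset T :=
  Finset.univ.filter fun t => fam t = k

/-- The plug-in estimator of the linear part of the tractable AAI functional:
`Φ̂(ω) = ∑_k (w_k/|F_k|) ∑_{t∈F_k} (1/n) ∑_i ψ_t(q_{t,i}(ω))`. -/
noncomputable def linEst {T K : Type*} [Fintype T] [Fintype K] [DecidableEq K] {Ω : Type*}
    (fam : T → K) (w : K → ℝ) (ψ : T → ℝ → ℝ) (n : ℕ)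
    (q : T × Fin n → Ω → ℝ) (ω : Ω) : ℝ :=
  ∑ k : K, (w k / ((famSet fam k).card : ℝ)) *
    ∑ t ∈ famSet fam k, (n : ℝ)⁻¹ * ∑ i : Fin n, ψ t (q (t, i) ω)

lemma hoeffding_core {p : ℝ} (hp0 : 0 ≤ p) (hp1 : p ≤ 1) (h : ℝ) :
    (1 - p) * Real.exp (-(p * h)) + p * Real.exp ((1 - p) * h) ≤ Real.exp (h ^ 2 / 8) := by
  have hexp : (1:ℝ) ≤ Real.exp (h ^ 2 / 8) := by
    rw [show (1:ℝ) = Real.exp 0 by simp]; apply Real.exp_le_exp.2; positivity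
  rcases eq_or_lt_of_le hp0 with hp0' | hp0'
  · simpa [← hp0'] using hexp
  rcases eq_or_lt_of_le hp1 with hp1' | hp1'
  · simpa [hp1'] using hexp
  -- 0 < p < 1 case
  set F : ℝ → ℝ := fun x => 1 - p + p * Real.exp x with hF
  have hFpos : ∀ x, 0 < F x := fun x => by
    have := Real.exp_pos x; simp only [hF]; nlinarith
  -- LHS = exp (-(p*h)) * F h
  have hlhs : (1 - p) * Real.exp (-(p * h)) + p * Real.exp ((1 - p) * h)
      = Real.exp (-(p*h)) * F h := by
    simp only [hF]
    rw [show (1-p)*h = h - p*h by ring, Real.exp_sub]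
    have := Real.exp_pos (p*h)
    field_simp [Real.exp_neg]
    have he : Real.exp (-(p*h)) * Real.exp (p*h) = 1 := by rw [← Real.exp_add]; simp
    linear_combination (-(p * Real.exp h)) * he
  -- define D x = x^2/8 + p*x - log (F x), show D h ≥ 0
  set D : ℝ → ℝ := fun x => x ^ 2 / 8 + p * x - Real.log (F x) with hD
  set D' : ℝ → ℝ := fun x => x / 4 + p - p * Real.exp x / F x with hD'
  have hF' : ∀ x, HasDerivAt F (p * Real.exp x) x := fun x => by
    exact ((Real.hasDerivAt_exp x).const_mul p).const_add (1 - p)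
  have hDeriv : ∀ x, HasDerivAt D (D' x) x := by
    intro x
    have hlog : HasDerivAt (fun y => Real.log (F y)) (p * Real.exp x / F x) x :=
      (hF' x).log (hFpos x).ne'
    have h1 : HasDerivAt (fun y : ℝ => y ^ 2 / 8 + p * y) (x / 4 + p) x := by
      have := ((hasDerivAt_pow 2 x).div_const 8).add ((hasDerivAt_id x).const_mul p)
      exact this.congr_deriv (by ring)
    exact h1.sub hlog
  have hD'Deriv : ∀ x, HasDerivAt D'
      (1/4 - (p * Real.exp x * F x - p * Real.exp x * (p * Real.exp x)) / (F x)^2) x := by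
    intro x
    have hq : HasDerivAt (fun y => p * Real.exp y / F y)
        ((p * Real.exp x * F x - p * Real.exp x * (p * Real.exp x)) / (F x)^2) x :=
      ((Real.hasDerivAt_exp x).const_mul p).div (hF' x) (hFpos x).ne'
    have h1 : HasDerivAt (fun y : ℝ => y / 4 + p) (1/4) x := by
      simpa using (hasDerivAt_id x).div_const 4 |>.add_const p
    exact h1.sub hq
  have hD'nonneg : ∀ x, 0 ≤ 1/4 - (p * Real.exp x * F x - p * Real.exp x * (p * Real.exp x)) / (F x)^2 := by
    intro x
    rw [sub_nonneg, div_le_iff₀ (pow_pos (hFpos x) 2)]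
    have hFx : F x = 1 - p + p * Real.exp x := rfl
    nlinarith [sq_nonneg (1 - p - p * Real.exp x), Real.exp_pos x, hFpos x]
  have hD'mono : Monotone D' :=
    monotone_of_deriv_nonneg (fun x => (hD'Deriv x).differentiableAt)
      (fun x => by rw [(hD'Deriv x).deriv]; exact hD'nonneg x)
  have hD'0 : D' 0 = 0 := by simp [hD', hF]
  have hD0 : D 0 = 0 := by simp [hD, hF]
  have hDnonneg : 0 ≤ D h := by
    rcases le_or_gt 0 h with hh | hh
    · have : MonotoneOn D (Set.Ici 0) :=
        monotoneOn_of_deriv_nonneg (convex_Ici 0)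
          (fun x _ => (hDeriv x).differentiableAt.continuousAt.continuousWithinAt)
          (fun x _ => (hDeriv x).differentiableAt.differentiableWithinAt)
          (fun x hx => by
            rw [(hDeriv x).deriv, ← hD'0]
            exact hD'mono (le_of_lt (by simpa using hx)))
      have := this Set.self_mem_Ici hh hh
      rwa [hD0] at this
    · have : AntitoneOn D (Set.Iic 0) :=
        antitoneOn_of_deriv_nonpos (convex_Iic 0)
          (fun x _ => (hDeriv x).differentiableAt.continuousAt.continuousWithinAt)
          (fun x _ => (hDeriv x).differentiableAt.differentiableWithinAt)
          (fun x hx => by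
            rw [(hDeriv x).deriv, ← hD'0]
            exact hD'mono (le_of_lt (by simpa using hx)))
      have := this hh.le Set.self_mem_Iic hh.le
      rwa [hD0] at this
  -- conclude
  rw [hlhs]
  have hlog : Real.log (F h) ≤ h ^ 2 / 8 + p * h := by
    have : 0 ≤ h ^ 2 / 8 + p * h - Real.log (F h) := hDnonneg
    linarith
  calc Real.exp (-(p*h)) * F h
      = Real.exp (-(p*h) + Real.log (F h)) := by
        rw [Real.exp_add, Real.exp_log (hFpos h)]
    _ ≤ Real.exp (h ^ 2 / 8) := by
        apply Real.exp_le_exp.2; linarith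

lemma integrable_of_bdd {Ω : Type*} [MeasurableSpace Ω] {μ : Measure Ω} [IsFiniteMeasure μ]
    {f : Ω → ℝ} (hmeas : Measurable f) (B : ℝ) (hB : ∀ ω, |f ω| ≤ B) :
    Integrable f μ :=
  ⟨hmeas.aestronglyMeasurable, HasFiniteIntegral.of_bounded (C := B) (ae_of_all _ hB)⟩

lemma hoeffding_mgf {Ω : Type*} [MeasurableSpace Ω] (μ : Measure Ω) [IsProbabilityMeasure μ]
    (X : Ω → ℝ) (hX : Measurable X) {a b : ℝ} (hab : ∀ ω, X ω ∈ Set.Icc a b)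
    (hmean : ∫ ω, X ω ∂μ = 0) (t : ℝ) :
    mgf X μ t ≤ Real.exp (t ^ 2 * (b - a) ^ 2 / 8) := by
  have hne : Nonempty Ω := by
    rcases isEmpty_or_nonempty Ω with hΩ | hΩ
    · exfalso
      have h1 : μ Set.univ = 1 := measure_univ
      rw [Set.univ_eq_empty_iff.2 hΩ] at h1
      simp at h1
    · exact hΩ
  obtain ⟨ω₀⟩ := hne
  have hab' : a ≤ b := le_trans (hab ω₀).1 (hab ω₀).2
  have hM : ∀ ω, |X ω| ≤ max |a| |b| := by
    intro ω
    rcases hab ω with ⟨h1, h2⟩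
    rw [abs_le]
    constructor
    · calc -(max |a| |b|) ≤ -|a| := by simp [neg_le_neg_iff]
        _ ≤ a := neg_abs_le a
        _ ≤ X ω := h1
    · exact h2.trans ((le_abs_self b).trans (le_max_right _ _))
  have hXint : Integrable X μ := integrable_of_bdd hX _ hM
  have ha0 : a ≤ 0 := by
    have : ∫ _ : Ω, a ∂μ ≤ ∫ ω, X ω ∂μ :=
      integral_mono (integrable_const a) hXint fun ω => (hab ω).1
    simpa [hmean] using this
  have hb0 : 0 ≤ b := by
    have : ∫ ω, X ω ∂μ ≤ ∫ _ : Ω, b ∂μ :=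
      integral_mono hXint (integrable_const b) fun ω => (hab ω).2
    simpa [hmean] using this
  rcases eq_or_lt_of_le hab' with heq | hlt
  · -- a = b forces X ≡ 0
    have ha : a = 0 := le_antisymm ha0 (heq ▸ hb0)
    have hb : b = 0 := heq ▸ ha
    have hX0 : ∀ ω, X ω = 0 := fun ω =>
      le_antisymm (hb ▸ (hab ω).2) (ha ▸ (hab ω).1)
    have : mgf X μ t = 1 := by
      simp [mgf, hX0]
    rw [this, show (1:ℝ) = Real.exp 0 by simp]
    apply Real.exp_le_exp.2; positivity
  -- a < b case
  have hba : 0 < b - a := sub_pos.2 hlt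
  set p : ℝ := -a / (b - a) with hp
  have hp0 : 0 ≤ p := div_nonneg (neg_nonneg.2 ha0) hba.le
  have hp1 : p ≤ 1 := by
    rw [hp, div_le_one hba]; linarith
  set c2 : ℝ := (Real.exp (t * b) - Real.exp (t * a)) / (b - a) with hc2
  set c1 : ℝ := (b * Real.exp (t * a) - a * Real.exp (t * b)) / (b - a) with hc1
  have hpt : ∀ ω, Real.exp (t * X ω) ≤ c1 + c2 * X ω := by
    intro ω
    rcases hab ω with ⟨h1, h2⟩
    set x := X ω
    have hl1 : 0 ≤ (b - x) / (b - a) := div_nonneg (by linarith) hba.le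
    have hl2 : 0 ≤ (x - a) / (b - a) := div_nonneg (by linarith) hba.le
    have hsum : (b - x) / (b - a) + (x - a) / (b - a) = 1 := by
      field_simp
      ring
    have hconv := convexOn_exp.2 (Set.mem_univ (t * a)) (Set.mem_univ (t * b)) hl1 hl2 hsum
    have harg : ((b - x) / (b - a)) • (t * a) + ((x - a) / (b - a)) • (t * b) = t * x := by
      simp only [smul_eq_mul]
      field_simp
      ring
    rw [harg] at hconv
    calc Real.exp (t * x) ≤ (b - x) / (b - a) * Real.exp (t * a)
          + (x - a) / (b - a) * Real.exp (t * b) := by simpa using hconv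
      _ = c1 + c2 * x := by rw [hc1, hc2]; field_simp; ring
  have hexpint : Integrable (fun ω => Real.exp (t * X ω)) μ := by
    apply integrable_of_bdd (by fun_prop) (Real.exp (|t| * max |a| |b|))
    intro ω
    rw [abs_of_nonneg (Real.exp_nonneg _)]
    apply Real.exp_le_exp.2
    calc t * X ω ≤ |t * X ω| := le_abs_self _
      _ = |t| * |X ω| := abs_mul _ _
      _ ≤ |t| * max |a| |b| := by
          apply mul_le_mul_of_nonneg_left (hM ω) (abs_nonneg t)
  have hmgf : mgf X μ t ≤ c1 := by
    have hrhsint : Integrable (fun ω => c1 + c2 * X ω) μ :=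
      (integrable_const c1).add (hXint.const_mul c2)
    have := integral_mono hexpint hrhsint hpt
    rw [integral_add (integrable_const c1) (hXint.const_mul c2),
      MeasureTheory.integral_const_mul, hmean] at this
    simpa [mgf] using this
  have hkey : c1 = (1 - p) * Real.exp (-(p * (t * (b - a))))
      + p * Real.exp ((1 - p) * (t * (b - a))) := by
    have h1 : -(p * (t * (b - a))) = t * a := by
      rw [hp]; field_simp
    have h2 : (1 - p) * (t * (b - a)) = t * b := by
      rw [hp]; field_simp; ring
    rw [h1, h2, hc1, hp]
    field_simp
    ring
  calc mgf X μ t ≤ c1 := hmgf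
    _ ≤ Real.exp ((t * (b - a)) ^ 2 / 8) := by rw [hkey]; exact hoeffding_core hp0 hp1 _
    _ = Real.exp (t ^ 2 * (b - a) ^ 2 / 8) := by ring_nf

lemma hoeffding_sum {ι Ω : Type*} [Fintype ι] [MeasurableSpace Ω] (μ : Measure Ω)
    [IsProbabilityMeasure μ] (X : ι → Ω → ℝ) (hmeas : ∀ i, Measurable (X i))
    (a b : ι → ℝ) (hab : ∀ i ω, X i ω ∈ Set.Icc (a i) (b i))
    (hindep : iIndepFun X μ)
    (c : ℝ) (hc : 0 < c) (hbd : ∀ i, b i - a i ≤ c) (ε : ℝ) (hε : 0 < ε) :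
    (μ {ω | ε ≤ |∑ i, X i ω - ∫ ω', ∑ j, X j ω' ∂μ|}).toReal
      ≤ 2 * Real.exp (-2 * ε ^ 2 / ((Fintype.card ι : ℝ) * c ^ 2)) := by
  rcases isEmpty_or_nonempty ι with hι | hι
  · have : {ω : Ω | ε ≤ |∑ i, X i ω - ∫ ω', ∑ j, X j ω' ∂μ|} = ∅ := by
      ext ω
      simp [hε.not_ge, abs_of_nonneg]
    rw [this, measure_empty]
    simp only [ENNReal.toReal_zero]
    positivity
  have hN : 0 < (Fintype.card ι : ℝ) := by
    have := Fintype.card_pos (α := ι)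
    exact_mod_cast this
  set N : ℝ := (Fintype.card ι : ℝ) with hNdef
  -- basic integrability
  have hXM : ∀ i, ∀ ω, |X i ω| ≤ max |a i| |b i| := by
    intro i ω
    rcases hab i ω with ⟨h1, h2⟩
    rw [abs_le]
    exact ⟨le_trans (by simpa [neg_le_neg_iff] using (le_max_left |a i| |b i|)) ((neg_abs_le (a i)).trans h1),
      h2.trans ((le_abs_self (b i)).trans (le_max_right _ _))⟩
  have hXint : ∀ i, Integrable (X i) μ := fun i => integrable_of_bdd (hmeas i) _ (hXM i)
  set m : ι → ℝ := fun i => ∫ ω, X i ω ∂μ with hm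
  have hmmem : ∀ i, m i ∈ Set.Icc (a i) (b i) := by
    intro i
    constructor
    · have : ∫ _ : Ω, a i ∂μ ≤ ∫ ω, X i ω ∂μ :=
        integral_mono (integrable_const _) (hXint i) fun ω => (hab i ω).1
      simpa using this
    · have : ∫ ω, X i ω ∂μ ≤ ∫ _ : Ω, b i ∂μ :=
        integral_mono (hXint i) (integrable_const _) fun ω => (hab i ω).2
      simpa using this
  set Y : ι → Ω → ℝ := fun i ω => X i ω - m i with hY
  have hYmeas : ∀ i, Measurable (Y i) := fun i => (hmeas i).sub measurable_const
  have hYbd : ∀ i ω, |Y i ω| ≤ c := by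
    intro i ω
    rcases hab i ω with ⟨h1, h2⟩
    rcases hmmem i with ⟨h3, h4⟩
    rw [abs_le]
    simp only [hY]
    constructor <;> linarith [hbd i]
  have hYindep : iIndepFun Y μ := by
    have := hindep.comp (fun i => fun x : ℝ => x - m i)
      (fun i => measurable_id.sub measurable_const)
    exact this
  have hYmean : ∀ i, ∫ ω, Y i ω ∂μ = 0 := by
    intro i
    rw [hY]
    simp only
    rw [integral_sub (hXint i) (integrable_const _)]
    simp [hm]
  -- the centered sum
  have hSrep : ∀ ω, ∑ i, X i ω - ∫ ω', ∑ j, X j ω' ∂μ = ∑ i, Y i ω := by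
    intro ω
    rw [integral_finset_sum _ (fun i _ => hXint i)]
    simp only [hY]
    rw [Finset.sum_sub_distrib]
  have hSbd : ∀ ω, |∑ i, Y i ω| ≤ N * c := by
    intro ω
    calc |∑ i, Y i ω| ≤ ∑ i, |Y i ω| := Finset.abs_sum_le_sum_abs _ _
      _ ≤ ∑ _i : ι, c := Finset.sum_le_sum fun i _ => hYbd i ω
      _ = N * c := by simp [hNdef, mul_comm]
  have hSmeas : Measurable (fun ω => ∑ i, Y i ω) :=
    Finset.measurable_sum _ fun i _ => hYmeas i
  -- mgf bound for the centered sum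
  have hmgf : ∀ s : ℝ, mgf (fun ω => ∑ i, Y i ω) μ s ≤ Real.exp (N * (s ^ 2 * c ^ 2 / 8)) := by
    intro s
    have hsum_eq : (fun ω => ∑ i, Y i ω) = ∑ i, Y i := by
      funext ω; rw [Finset.sum_apply]
    rw [hsum_eq, hYindep.mgf_sum hYmeas]
    calc ∏ i : ι, mgf (Y i) μ s
        ≤ ∏ _i : ι, Real.exp (s ^ 2 * c ^ 2 / 8) := by
          apply Finset.prod_le_prod (fun i _ => mgf_nonneg)
          intro i _
          calc mgf (Y i) μ s ≤ Real.exp (s ^ 2 * (b i - m i - (a i - m i)) ^ 2 / 8) :=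
                hoeffding_mgf μ (Y i) (hYmeas i)
                  (fun ω => ⟨by have := (hab i ω).1; simp only [hY]; linarith,
                    by have := (hab i ω).2; simp only [hY]; linarith⟩)
                  (hYmean i) s
            _ ≤ Real.exp (s ^ 2 * c ^ 2 / 8) := by
                apply Real.exp_le_exp.2
                have h1 : b i - m i - (a i - m i) = b i - a i := by ring
                rw [h1]
                have h2 : 0 ≤ b i - a i := by
                  obtain ⟨ω⟩ : Nonempty Ω := by
                    rcases isEmpty_or_nonempty Ω with hΩ | hΩ
                    · exfalso
                      have h1 : μ Set.univ = 1 := measure_univ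
                      rw [Set.univ_eq_empty_iff.2 hΩ] at h1
                      simp at h1
                    · exact hΩ
                  have := hab i ω; linarith [this.1, this.2]
                have h3 : (b i - a i) ^ 2 ≤ c ^ 2 := by nlinarith [hbd i]
                nlinarith [sq_nonneg s]
      _ = Real.exp (N * (s ^ 2 * c ^ 2 / 8)) := by
          rw [Finset.prod_const, ← Real.exp_nat_mul]
          simp [hNdef]
  -- integrability of exp(s * sum)
  have hexpint : ∀ s : ℝ, Integrable (fun ω => Real.exp (s * ∑ i, Y i ω)) μ := by
    intro s
    apply integrable_of_bdd (by fun_prop) (Real.exp (|s| * (N * c)))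
    intro ω
    rw [abs_of_nonneg (Real.exp_nonneg _)]
    apply Real.exp_le_exp.2
    calc s * ∑ i, Y i ω ≤ |s * ∑ i, Y i ω| := le_abs_self _
      _ = |s| * |∑ i, Y i ω| := abs_mul _ _
      _ ≤ |s| * (N * c) := mul_le_mul_of_nonneg_left (hSbd ω) (abs_nonneg s)
  -- Chernoff, with the optimal t
  set s : ℝ := 4 * ε / (N * c ^ 2) with hs
  have hspos : 0 < s := by positivity
  have harith : -s * ε + N * (s ^ 2 * c ^ 2 / 8) = -2 * ε ^ 2 / (N * c ^ 2) := by
    rw [hs]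
    field_simp
    ring
  have hbound1 : (μ {ω | ε ≤ ∑ i, Y i ω}).toReal ≤ Real.exp (-2 * ε ^ 2 / (N * c ^ 2)) := by
    calc (μ {ω | ε ≤ ∑ i, Y i ω}).toReal
        ≤ Real.exp (-s * ε) * mgf (fun ω => ∑ i, Y i ω) μ s :=
          measure_ge_le_exp_mul_mgf ε hspos.le (hexpint s)
      _ ≤ Real.exp (-s * ε) * Real.exp (N * (s ^ 2 * c ^ 2 / 8)) :=
          mul_le_mul_of_nonneg_left (hmgf s) (Real.exp_nonneg _)
      _ = Real.exp (-2 * ε ^ 2 / (N * c ^ 2)) := by rw [← Real.exp_add, harith]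
  have hbound2 : (μ {ω | (∑ i, Y i ω) ≤ -ε}).toReal ≤ Real.exp (-2 * ε ^ 2 / (N * c ^ 2)) := by
    have harith2 : -(-s) * (-ε) + N * ((-s) ^ 2 * c ^ 2 / 8) = -2 * ε ^ 2 / (N * c ^ 2) := by
      rw [← harith]; ring
    calc (μ {ω | (∑ i, Y i ω) ≤ -ε}).toReal
        ≤ Real.exp (-(-s) * (-ε)) * mgf (fun ω => ∑ i, Y i ω) μ (-s) :=
          measure_le_le_exp_mul_mgf (-ε) (by linarith) (hexpint (-s))
      _ ≤ Real.exp (-(-s) * (-ε)) * Real.exp (N * ((-s) ^ 2 * c ^ 2 / 8)) :=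
          mul_le_mul_of_nonneg_left (hmgf (-s)) (Real.exp_nonneg _)
      _ = Real.exp (-2 * ε ^ 2 / (N * c ^ 2)) := by rw [← Real.exp_add, harith2]
  -- combine
  have hseteq : {ω : Ω | ε ≤ |∑ i, X i ω - ∫ ω', ∑ j, X j ω' ∂μ|}
      = {ω : Ω | ε ≤ |∑ i, Y i ω|} := by
    ext ω; rw [Set.mem_setOf_eq, Set.mem_setOf_eq, hSrep ω]
  have hsub : {ω : Ω | ε ≤ |∑ i, Y i ω|}
      ⊆ {ω : Ω | ε ≤ ∑ i, Y i ω} ∪ {ω | (∑ i, Y i ω) ≤ -ε} := by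
    intro ω hω
    simp only [Set.mem_setOf_eq] at hω
    rcases le_abs.1 hω with h | h
    · exact Or.inl h
    · refine Or.inr ?_
      simp only [Set.mem_setOf_eq]
      linarith
  rw [hseteq]
  calc (μ {ω : Ω | ε ≤ |∑ i, Y i ω|}).toReal
      ≤ (μ ({ω : Ω | ε ≤ ∑ i, Y i ω} ∪ {ω | (∑ i, Y i ω) ≤ -ε})).toReal :=
        ENNReal.toReal_mono (measure_ne_top _ _) (measure_mono hsub)
    _ ≤ (μ {ω : Ω | ε ≤ ∑ i, Y i ω} + μ {ω | (∑ i, Y i ω) ≤ -ε}).toReal :=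
        ENNReal.toReal_mono (by finiteness) (measure_union_le _ _)
    _ = (μ {ω : Ω | ε ≤ ∑ i, Y i ω}).toReal + (μ {ω | (∑ i, Y i ω) ≤ -ε}).toReal :=
        ENNReal.toReal_add (measure_ne_top _ _) (measure_ne_top _ _)
    _ ≤ 2 * Real.exp (-2 * ε ^ 2 / (N * c ^ 2)) := by linarith

/-- **McDiarmid concentration of the linear part of the plug-in AAI estimator.**
With weights satisfying `w_k/|F_k| ≤ C/|T|`, `L`-Lipschitz per-task scores `ψ_t`, and
`n` independent `[0,1]`-valued seed draws per task, the estimator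
`Φ̂ = ∑_k (w_k/|F_k|) ∑_{t∈F_k} (1/n) ∑_i ψ_t(q_{t,i})` satisfies
`P(|Φ̂ − E Φ̂| ≥ ε) ≤ 2 exp(−2 n |T| ε² / (C L)²)` for every `ε > 0`. -/
theorem stmt_14 {T K : Type*} [Fintype T] [Nonempty T] [Fintype K] [Nonempty K]
    [DecidableEq K] {Ω : Type*} [MeasurableSpace Ω]
    (μ : Measure Ω) [IsProbabilityMeasure μ]
    (fam : T → K) (hfam : Function.Surjective fam)
    (C : ℝ) (hC : 0 < C) (w : K → ℝ) (hw : ∀ k, 0 ≤ w k)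
    (hwC : ∀ k, w k / ((famSet fam k).card : ℝ) ≤ C / (Fintype.card T : ℝ))
    (L : ℝ) (hL : 0 < L) (ψ : T → ℝ → ℝ)
    (hψ : ∀ t, ∀ a ∈ Set.Icc (0:ℝ) 1, ∀ b ∈ Set.Icc (0:ℝ) 1,
      |ψ t a - ψ t b| ≤ L * |a - b|)
    (n : ℕ) (hn : 1 ≤ n)
    (q : T × Fin n → Ω → ℝ)
    (hqmeas : ∀ ti, Measurable (q ti))
    (hq01 : ∀ ti ω, q ti ω ∈ Set.Icc (0:ℝ) 1)
    (hindep : iIndepFun q μ) :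
    ∀ ε : ℝ, 0 < ε →
      (μ {ω | ε ≤ |linEst fam w ψ n q ω - ∫ ω', linEst fam w ψ n q ω' ∂μ|}).toReal
        ≤ 2 * Real.exp (-(2 * n * (Fintype.card T : ℝ) * ε ^ 2) / (C * L) ^ 2) := by
  intro ε hε
  classical
  have hTpos : 0 < (Fintype.card T : ℝ) := by
    have := Fintype.card_pos (α := T); exact_mod_cast this
  have hnpos : 0 < (n : ℝ) := by exact_mod_cast hn
  -- per-task weights
  set aT : T → ℝ := fun t => w (fam t) / ((famSet fam (fam t)).card : ℝ) with haT
  have haT0 : ∀ t, 0 ≤ aT t := fun t =>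
    div_nonneg (hw _) (Nat.cast_nonneg _)
  have haTC : ∀ t, aT t ≤ C / (Fintype.card T : ℝ) := fun t => hwC (fam t)
  -- clamped score function
  set g : T → ℝ → ℝ := fun t x => ψ t (max 0 (min x 1)) with hg
  have hclamp : ∀ x : ℝ, max 0 (min x 1) ∈ Set.Icc (0:ℝ) 1 :=
    fun x => ⟨le_max_left _ _, max_le (by norm_num) (min_le_right _ _)⟩
  have hg_eq : ∀ t (x : ℝ), x ∈ Set.Icc (0:ℝ) 1 → g t x = ψ t x := by
    intro t x hx
    simp only [hg]
    rw [min_eq_left hx.2, max_eq_right hx.1]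
  have hgcont : ∀ t, Continuous (g t) := by
    intro t
    have hLip : ContinuousOn (ψ t) (Set.Icc (0:ℝ) 1) := by
      apply LipschitzOnWith.continuousOn (K := L.toNNReal)
      apply LipschitzOnWith.of_dist_le_mul
      intro x hx y hy
      rw [Real.dist_eq, Real.dist_eq]
      calc |ψ t x - ψ t y| ≤ L * |x - y| := hψ t x hx y hy
        _ = L.toNNReal * |x - y| := by rw [Real.coe_toNNReal L hL.le]
    have hclampc : Continuous (fun x : ℝ => max 0 (min x 1)) :=
      continuous_const.max (continuous_id.min continuous_const)
    exact hLip.comp_continuous hclampc hclamp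
  -- infimum of ψ t on [0,1]
  set mI : T → ℝ := fun t => sInf (ψ t '' Set.Icc 0 1) with hmI
  have hne : ∀ t, (ψ t '' Set.Icc 0 1).Nonempty :=
    fun t => ⟨ψ t 0, ⟨0, by norm_num, rfl⟩⟩
  have hbdd : ∀ t, BddBelow (ψ t '' Set.Icc 0 1) := by
    intro t
    refine ⟨ψ t 0 - L, ?_⟩
    rintro y ⟨x, hx, rfl⟩
    have h0 := hψ t 0 (by norm_num) x hx
    have habs : |ψ t 0 - ψ t x| ≤ L := by
      refine h0.trans ?_
      have h1 : |(0:ℝ) - x| ≤ 1 := by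
        rw [abs_le]; constructor <;> linarith [hx.1, hx.2]
      nlinarith [hL.le]
    linarith [(abs_le.1 habs).1, (abs_le.1 habs).2]
  have hmle : ∀ t, ∀ x ∈ Set.Icc (0:ℝ) 1, mI t ≤ ψ t x :=
    fun t x hx => csInf_le (hbdd t) ⟨x, hx, rfl⟩
  have hmub : ∀ t, ∀ x ∈ Set.Icc (0:ℝ) 1, ψ t x ≤ mI t + L := by
    intro t x hx
    have : ψ t x - L ≤ mI t := by
      apply le_csInf (hne t)
      rintro y ⟨z, hz, rfl⟩
      have h0 := hψ t x hx z hz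
      have habs : |ψ t x - ψ t z| ≤ L := by
        refine h0.trans ?_
        have h1 : |x - z| ≤ 1 := by
          rw [abs_le]; constructor <;> linarith [hx.1, hx.2, hz.1, hz.2]
        nlinarith [hL.le]
      linarith [(abs_le.1 habs).1, (abs_le.1 habs).2]
    linarith
  -- the summands
  set Y : T × Fin n → Ω → ℝ := fun ti ω => ((n:ℝ)⁻¹ * aT ti.1) * g ti.1 (q ti ω) with hY
  set lo : T × Fin n → ℝ := fun ti => ((n:ℝ)⁻¹ * aT ti.1) * mI ti.1 with hlo
  set hi : T × Fin n → ℝ := fun ti => ((n:ℝ)⁻¹ * aT ti.1) * (mI ti.1 + L) with hhi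
  have hcoef : ∀ ti : T × Fin n, 0 ≤ (n:ℝ)⁻¹ * aT ti.1 :=
    fun ti => mul_nonneg (by positivity) (haT0 _)
  have hYab : ∀ ti ω, Y ti ω ∈ Set.Icc (lo ti) (hi ti) := by
    intro ti ω
    have hq := hclamp (q ti ω)
    constructor
    · exact mul_le_mul_of_nonneg_left (hmle ti.1 _ hq) (hcoef ti)
    · exact mul_le_mul_of_nonneg_left (hmub ti.1 _ hq) (hcoef ti)
  set c : ℝ := C * L / ((n : ℝ) * (Fintype.card T : ℝ)) with hc'
  have hc : 0 < c := by positivity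
  have hwidth : ∀ ti : T × Fin n, hi ti - lo ti ≤ c := by
    intro ti
    have : hi ti - lo ti = ((n:ℝ)⁻¹ * aT ti.1) * L := by
      simp only [hhi, hlo]; ring
    rw [this, hc']
    have h1 : (n:ℝ)⁻¹ * aT ti.1 ≤ (n:ℝ)⁻¹ * (C / (Fintype.card T : ℝ)) :=
      mul_le_mul_of_nonneg_left (haTC _) (by positivity)
    calc ((n:ℝ)⁻¹ * aT ti.1) * L ≤ ((n:ℝ)⁻¹ * (C / (Fintype.card T : ℝ))) * L :=
          mul_le_mul_of_nonneg_right h1 hL.le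
      _ = C * L / ((n : ℝ) * (Fintype.card T : ℝ)) := by field_simp
  have hYmeas : ∀ ti, Measurable (Y ti) :=
    fun ti => (((hgcont ti.1).measurable).comp (hqmeas ti)).const_mul _
  have hYindep : iIndepFun Y μ := by
    have := hindep.comp (fun ti => fun x : ℝ => ((n:ℝ)⁻¹ * aT ti.1) * g ti.1 x)
      (fun ti => ((hgcont ti.1).measurable).const_mul _)
    exact this
  -- rewrite linEst as a sum over T × Fin n
  have hlin : ∀ ω, linEst fam w ψ n q ω = ∑ ti : T × Fin n, Y ti ω := by
    intro ω
    unfold linEst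
    have step1 : ∀ k : K, (w k / ((famSet fam k).card : ℝ)) *
        ∑ t ∈ famSet fam k, (n : ℝ)⁻¹ * ∑ i : Fin n, ψ t (q (t, i) ω)
        = ∑ t ∈ famSet fam k, ∑ i : Fin n, Y (t, i) ω := by
      intro k
      rw [Finset.mul_sum]
      apply Finset.sum_congr rfl
      intro t ht
      have hfamt : fam t = k := by
        simpa [famSet] using ht
      have hwk : w k / ((famSet fam k).card : ℝ) = aT t := by
        simp only [haT]; rw [hfamt]
      have hYi : ∀ i : Fin n, Y (t, i) ω = ((n:ℝ)⁻¹ * aT t) * ψ t (q (t, i) ω) := by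
        intro i
        simp only [hY]
        rw [hg_eq t _ (hq01 (t, i) ω)]
      rw [hwk, Finset.sum_congr rfl (fun i _ => hYi i), ← Finset.mul_sum]
      ring
    rw [Finset.sum_congr rfl (fun k _ => step1 k)]
    rw [show (famSet fam : K → Finset T) = fun k => Finset.univ.filter fun t => fam t = k from rfl]
    rw [Finset.sum_fiberwise Finset.univ fam (fun t => ∑ i : Fin n, Y (t, i) ω)]
    rw [Fintype.sum_prod_type]
  have hfun : linEst fam w ψ n q = fun ω => ∑ ti : T × Fin n, Y ti ω := funext hlin
  have hmain := hoeffding_sum μ Y hYmeas lo hi hYab hYindep c hc hwidth ε hε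
  have hcard : (Fintype.card (T × Fin n) : ℝ) = (Fintype.card T : ℝ) * n := by
    rw [Fintype.card_prod, Fintype.card_fin]
    push_cast
    ring
  have hexp : -2 * ε ^ 2 / ((Fintype.card (T × Fin n) : ℝ) * c ^ 2)
      = -(2 * n * (Fintype.card T : ℝ) * ε ^ 2) / (C * L) ^ 2 := by
    rw [hcard, hc']
    field_simp
  rw [hfun]
  calc (μ {ω | ε ≤ |(fun ω => ∑ ti : T × Fin n, Y ti ω) ω
        - ∫ ω', (fun ω => ∑ ti : T × Fin n, Y ti ω) ω' ∂μ|}).toReal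
      = (μ {ω | ε ≤ |∑ ti : T × Fin n, Y ti ω
        - ∫ ω', ∑ ti : T × Fin n, Y ti ω' ∂μ|}).toReal := rfl
    _ ≤ 2 * Real.exp (-2 * ε ^ 2 / ((Fintype.card (T × Fin n) : ℝ) * c ^ 2)) := hmain
    _ = 2 * Real.exp (-(2 * n * (Fintype.card T : ℝ) * ε ^ 2) / (C * L) ^ 2) := by
        rw [hexp]
end

section
/- Let T be a finite nonempty set partitioned into families {F_k}_{k∈K}, with weights w_k ≥ 0 satisfying w_k/|F_k| ≤ C/|T| for C > 0, per-task L-Lipschitz functions ψ_t : [0,1] → ℝ (L > 0), and penalty parameter λ ≥ 0. Let n ≥ 1 and let (q_{t,i})_{t∈T, 1≤i≤n} be independent [0,1]-valued random variables. Define the empirical score Φ̂ = Σ_k (w_k/|F_k|) Σ_{t∈F_k} (1/n) Σ_i ψ_t(q_{t,i}) − λ·V(m̂), where m̂_k = (1/(n|F_k|)) Σ_{t∈F_k} Σ_i q_{t,i}, V(m) = (1/|K|) Σ_k (m_k − m̄)² is the variance across families, and the population score Φ = E[Σ_k (w_k/|F_k|) Σ_{t∈F_k} (1/n) Σ_i ψ_t(q_{t,i})]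 − λ·V(m) with m_k = E[m̂_k]. Then for every δ ∈ (0,1), with probability at least 1 − δ, |Φ̂ − Φ| ≤ C·L·√(log(4/δ)/(2·n·|T|)) + 2·λ·√(log(4·|K|/δ)/(2·n)). -/
open MeasureTheory Finset ProbabilityTheory

/-- The empirical family mean `m̂_k(ω) = (1/(n|F_k|)) ∑_{t∈F_k} ∑_i q_{t,i}(ω)`. -/
noncomputable def famEst {T K : Type*} [Fintype T] [DecidableEq K] {Ω : Type*}
    (fam : T → K) (n : ℕ) (q : T × Fin n → Ω → ℝ) (k : K) (ω : Ω) : ℝ :=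
  ((n : ℝ) * ((famSet fam k).card : ℝ))⁻¹ *
    ∑ t ∈ famSet fam k, ∑ i : Fin n, q (t, i) ω

/-- The variance across families `V(m) = (1/|K|) ∑_k (m_k − m̄)²`. -/
noncomputable def varK {K : Type*} [Fintype K] (m : K → ℝ) : ℝ :=
  (Fintype.card K : ℝ)⁻¹ *
    ∑ k : K, (m k - (Fintype.card K : ℝ)⁻¹ * ∑ j : K, m j) ^ 2



section AuxHoeffding
open Real MeasureTheory ProbabilityTheory

-- core inequality: for p ∈ [0,1], log(1-p+p e^h) ≤ p h + h²/8
lemma hoeff_core {p : ℝ} (hp0 : 0 ≤ p) (hp1 : p ≤ 1) (h : ℝ) :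
    Real.log (1 - p + p * Real.exp h) ≤ p * h + h ^ 2 / 8 := by
  set c : ℝ := 1 - p with hc
  have hc0 : 0 ≤ c := by simp [hc]; linarith
  have hden : ∀ x : ℝ, 0 < c + p * Real.exp x := by
    intro x
    rcases lt_or_eq_of_le hp0 with hp | hp
    · have := Real.exp_pos x; positivity
    · simp [← hp, hc]
  -- f x = p x + x²/8 - log(c + p e^x), want f ≥ 0, f 0 = 0
  set f : ℝ → ℝ := fun x => p * x + x ^ 2 / 8 - Real.log (c + p * Real.exp x) with hf
  set g1 : ℝ → ℝ := fun x => p + x / 4 - p * Real.exp x / (c + p * Real.exp x) with hg1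
  have hderiv_f : ∀ x, HasDerivAt f (g1 x) x := by
    intro x
    have h1 : HasDerivAt (fun x : ℝ => c + p * Real.exp x) (p * Real.exp x) x := by
      simpa using ((Real.hasDerivAt_exp x).const_mul p).const_add c
    have h2 : HasDerivAt (fun x : ℝ => Real.log (c + p * Real.exp x))
        (p * Real.exp x / (c + p * Real.exp x)) x := h1.log (hden x).ne'
    have h3 : HasDerivAt (fun x : ℝ => p * x + x ^ 2 / 8) (p + x / 4) x := by
      have := ((hasDerivAt_pow 2 x).div_const 8).const_add 0
      have h4 : HasDerivAt (fun x : ℝ => p * x) p x := by simpa using (hasDerivAt_id x).const_mul p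
      have h5 : HasDerivAt (fun x : ℝ => x ^ 2 / 8) (x / 4) x := by
        have := (hasDerivAt_pow 2 x).div_const 8
        refine this.congr_deriv ?_; ring
      exact h4.add h5
    exact h3.sub h2
  have hderiv_g1 : ∀ x, HasDerivAt g1
      (1 / 4 - p * Real.exp x * c / (c + p * Real.exp x) ^ 2) x := by
    intro x
    have h1 : HasDerivAt (fun x : ℝ => p * Real.exp x) (p * Real.exp x) x :=
      (Real.hasDerivAt_exp x).const_mul p
    have h2 : HasDerivAt (fun x : ℝ => c + p * Real.exp x) (p * Real.exp x) x := h1.const_add c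
    have h3 : HasDerivAt (fun x : ℝ => p * Real.exp x / (c + p * Real.exp x))
        ((p * Real.exp x * (c + p * Real.exp x) - p * Real.exp x * (p * Real.exp x)) /
          (c + p * Real.exp x) ^ 2) x := h1.div h2 (hden x).ne'
    have h4 : HasDerivAt (fun x : ℝ => p + x / 4) (1 / 4) x := by
      simpa using ((hasDerivAt_id x).div_const 4).const_add p
    have := h4.sub h3
    refine this.congr_deriv ?_
    field_simp
    ring
  have hg2nonneg : ∀ x, 0 ≤ 1 / 4 - p * Real.exp x * c / (c + p * Real.exp x) ^ 2 := by
    intro x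
    rw [sub_nonneg, div_le_iff₀ (pow_pos (hden x) 2)]
    nlinarith [sq_nonneg (c - p * Real.exp x), (hden x).le, Real.exp_pos x,
      mul_nonneg hp0 (Real.exp_pos x).le]
  have hg1mono : Monotone g1 := by
    apply monotone_of_deriv_nonneg
    · exact fun x => (hderiv_g1 x).differentiableAt
    · intro x; rw [(hderiv_g1 x).deriv]; exact hg2nonneg x
  have hcp : c + p = 1 := by simp [hc]
  have hg10 : g1 0 = 0 := by
    simp only [hg1]
    rw [Real.exp_zero, mul_one, hcp]; simp
  have hf0 : f 0 = 0 := by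
    simp only [hf]
    rw [Real.exp_zero, mul_one, hcp]; simp
  have hkey : 0 ≤ f h := by
    rcases le_or_gt 0 h with hh | hh
    · have hmono : MonotoneOn f (Set.Ici 0) := by
        apply monotoneOn_of_deriv_nonneg (convex_Ici 0)
          (fun x _ => (hderiv_f x).continuousAt.continuousWithinAt)
          (fun x _ => (hderiv_f x).differentiableAt.differentiableWithinAt)
        intro x hx
        rw [(hderiv_f x).deriv, ← hg10]
        exact hg1mono (le_of_lt (by simpa using hx))
      have := hmono (Set.self_mem_Ici) (by exact hh) hh
      rwa [hf0] at this
    · have hanti : AntitoneOn f (Set.Iic 0) := by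
        apply antitoneOn_of_deriv_nonpos (convex_Iic 0)
          (fun x _ => (hderiv_f x).continuousAt.continuousWithinAt)
          (fun x _ => (hderiv_f x).differentiableAt.differentiableWithinAt)
        intro x hx
        rw [(hderiv_f x).deriv, ← hg10]
        exact hg1mono (le_of_lt (by simpa using hx))
      have := hanti (by exact hh.le) (Set.self_mem_Iic) hh.le
      rwa [hf0] at this
  have : Real.log (c + p * Real.exp h) ≤ p * h + h ^ 2 / 8 := by
    simp only [hf] at hkey; linarith
  simpa [hc] using this

lemma integrable_bdd {Ω : Type*} [MeasurableSpace Ω] (μ : Measure Ω) [IsFiniteMeasure μ]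
    {X : Ω → ℝ} (hX : AEStronglyMeasurable X μ) {M : ℝ} (h : ∀ ω, |X ω| ≤ M) :
    Integrable X μ :=
  Integrable.mono' (integrable_const M) hX (Filter.Eventually.of_forall (by
    simpa [Real.norm_eq_abs] using h))

lemma hoeff_mgf {Ω : Type*} [MeasurableSpace Ω] (μ : Measure Ω) [IsProbabilityMeasure μ]
    {X : Ω → ℝ} (hX : Measurable X) {a b : ℝ} (hab : ∀ ω, X ω ∈ Set.Icc a b)
    (hmean : ∫ ω, X ω ∂μ = 0) (t : ℝ) :
    mgf X μ t ≤ Real.exp (t ^ 2 * (b - a) ^ 2 / 8) := by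
  have hXint : Integrable X μ := integrable_bdd μ hX.aestronglyMeasurable
    (M := max |a| |b|) (fun ω => abs_le.2 ⟨le_trans (neg_le_neg (le_max_left |a| |b|))
      (le_trans (neg_abs_le a) (hab ω).1), le_trans (hab ω).2 (le_trans (le_abs_self b)
      (le_max_right _ _))⟩)
  have ha0 : a ≤ 0 := by
    have : ∫ _ : Ω, a ∂μ ≤ ∫ ω, X ω ∂μ :=
      integral_mono (integrable_const a) hXint (fun ω => (hab ω).1)
    simpa [hmean] using this
  have hb0 : 0 ≤ b := by
    have : ∫ ω, X ω ∂μ ≤ ∫ _ : Ω, b ∂μ :=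
      integral_mono hXint (integrable_const b) (fun ω => (hab ω).2)
    simpa [hmean] using this
  rcases eq_or_lt_of_le (ha0.trans hb0) with hab' | hab'
  · -- a = b = 0, X ≡ 0
    have ha : a = 0 := le_antisymm ha0 (by rw [hab']; exact hb0)
    have hb : b = 0 := by rw [← hab', ha]
    have hX0 : ∀ ω, X ω = 0 := fun ω =>
      le_antisymm (by simpa [hb] using (hab ω).2) (by simpa [ha] using (hab ω).1)
    have : mgf X μ t = 1 := by
      unfold mgf
      simp [hX0]
    rw [this]
    exact Real.one_le_exp (by positivity)
  · -- a < b
    set p : ℝ := -a / (b - a) with hp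
    have hba : 0 < b - a := by linarith
    have hp0 : 0 ≤ p := by apply div_nonneg <;> linarith
    have hp1 : p ≤ 1 := by rw [div_le_one hba]; linarith
    set h : ℝ := t * (b - a) with hh
    -- pointwise convexity bound
    have hconv : ∀ ω, Real.exp (t * X ω) ≤
        (b - X ω) / (b - a) * Real.exp (t * a) + (X ω - a) / (b - a) * Real.exp (t * b) := by
      intro ω
      have hα : (0:ℝ) ≤ (b - X ω) / (b - a) := by
        apply div_nonneg _ hba.le; linarith [(hab ω).2]
      have hβ : (0:ℝ) ≤ (X ω - a) / (b - a) := by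
        apply div_nonneg _ hba.le; linarith [(hab ω).1]
      have hs : (b - X ω) / (b - a) + (X ω - a) / (b - a) = 1 := by
        rw [← add_div, div_eq_one_iff_eq hba.ne']; ring
      have h1 := convexOn_exp.2 (Set.mem_univ (t * a)) (Set.mem_univ (t * b)) hα hβ hs
      have heq : ((b - X ω) / (b - a)) • (t * a) + ((X ω - a) / (b - a)) • (t * b) = t * X ω := by
        rw [smul_eq_mul, smul_eq_mul]
        field_simp
        ring
      rw [heq] at h1
      simpa [smul_eq_mul] using h1
    -- integrate
    have hrhs_int : Integrable (fun ω =>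
        (b - X ω) / (b - a) * Real.exp (t * a) + (X ω - a) / (b - a) * Real.exp (t * b)) μ := by
      apply Integrable.add
      · exact ((((integrable_const b).sub hXint).div_const (b - a)).mul_const _)
      · exact (((hXint.sub (integrable_const a)).div_const (b - a)).mul_const _)
    have hlhs_int : Integrable (fun ω => Real.exp (t * X ω)) μ := by
      apply integrable_bdd μ (hX.const_mul t).exp.aestronglyMeasurable
        (M := Real.exp (|t| * max |a| |b|))
      intro ω
      rw [abs_of_nonneg (Real.exp_pos _).le, Real.exp_le_exp]
      calc t * X ω ≤ |t * X ω| := le_abs_self _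
        _ = |t| * |X ω| := abs_mul t (X ω)
        _ ≤ |t| * max |a| |b| := by
            apply mul_le_mul_of_nonneg_left _ (abs_nonneg t)
            rw [abs_le]
            exact ⟨le_trans (neg_le_neg (le_max_left |a| |b|))
              (le_trans (neg_abs_le a) (hab ω).1),
              le_trans (hab ω).2 (le_trans (le_abs_self b) (le_max_right _ _))⟩
    have hint_le : mgf X μ t ≤ b / (b - a) * Real.exp (t * a) + p * Real.exp (t * b) := by
      unfold mgf
      calc ∫ ω, Real.exp (t * X ω) ∂μ
          ≤ ∫ ω, ((b - X ω) / (b - a) * Real.exp (t * a)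
              + (X ω - a) / (b - a) * Real.exp (t * b)) ∂μ :=
            integral_mono hlhs_int hrhs_int hconv
        _ = b / (b - a) * Real.exp (t * a) + p * Real.exp (t * b) := by
            have e1 : ∀ ω, ((b - X ω) / (b - a) * Real.exp (t * a)
                + (X ω - a) / (b - a) * Real.exp (t * b))
              = (b / (b-a) * Real.exp (t*a) + (-a)/(b-a) * Real.exp (t*b))
                + (Real.exp (t*b)/(b-a) - Real.exp (t*a)/(b-a)) * X ω := by
              intro ω; field_simp; ring
            simp_rw [e1]
            rw [integral_add (integrable_const _) (hXint.const_mul _), integral_const,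
              integral_const_mul, hmean]
            simp [hp]
    -- rewrite RHS
    have hkey : b / (b - a) * Real.exp (t * a) + p * Real.exp (t * b)
        = Real.exp (t * a) * (1 - p + p * Real.exp h) := by
      have hb' : Real.exp (t * b) = Real.exp (t * a) * Real.exp h := by
        rw [← Real.exp_add]; congr 1; rw [hh]; ring
      have hcp : 1 - p = b / (b - a) := by rw [hp]; field_simp; ring
      rw [hb', ← hcp]; ring
    have hlog : 1 - p + p * Real.exp h ≤ Real.exp (p * h + h ^ 2 / 8) := by
      have hpos : 0 < 1 - p + p * Real.exp h := by
        rcases lt_or_eq_of_le hp0 with hpp | hpp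
        · have := Real.exp_pos h; nlinarith
        · rw [← hpp]; norm_num
      rw [← Real.log_le_iff_le_exp hpos]
      exact hoeff_core hp0 hp1 h
    calc mgf X μ t ≤ Real.exp (t * a) * (1 - p + p * Real.exp h) := by rw [← hkey]; exact hint_le
      _ ≤ Real.exp (t * a) * Real.exp (p * h + h ^ 2 / 8) :=
          mul_le_mul_of_nonneg_left hlog (Real.exp_pos _).le
      _ = Real.exp (t * a + p * h + h ^ 2 / 8) := by rw [← Real.exp_add]; ring_nf
      _ = Real.exp (t ^ 2 * (b - a) ^ 2 / 8) := by
          congr 1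
          have : t * a + p * h = 0 := by
            rw [hp, hh]; field_simp; ring
          rw [hh] at *
          nlinarith [this]

lemma bdd_abs {x a b : ℝ} (h : x ∈ Set.Icc a b) : |x| ≤ max |a| |b| :=
  abs_le.2 ⟨le_trans (neg_le_neg (le_max_left |a| |b|)) (le_trans (neg_abs_le a) h.1),
    le_trans h.2 (le_trans (le_abs_self b) (le_max_right _ _))⟩

lemma hoeff_sum_ge {ι Ω : Type*} [Fintype ι] [MeasurableSpace Ω] (μ : Measure Ω)
    [IsProbabilityMeasure μ]
    {X : ι → Ω → ℝ} (hindep : iIndepFun X μ)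
    (hmeas : ∀ i, Measurable (X i)) {a b : ι → ℝ}
    (hab : ∀ i ω, X i ω ∈ Set.Icc (a i) (b i))
    {D : ℝ} (hD : 0 < D) (hsum : ∑ i, (b i - a i) ^ 2 ≤ D)
    {ε : ℝ} (hε : 0 ≤ ε) :
    (μ {ω | ε ≤ ∑ i, (X i ω - ∫ ω', X i ω' ∂μ)}).toReal ≤ Real.exp (-(2 * ε ^ 2 / D)) := by
  classical
  set m : ι → ℝ := fun i => ∫ ω', X i ω' ∂μ with hm
  set Y : ι → Ω → ℝ := fun i ω => X i ω - m i with hY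
  have hYmeas : ∀ i, Measurable (Y i) := fun i => (hmeas i).sub_const (m i)
  have hYindep : iIndepFun Y μ :=
    hindep.comp (fun i x => x - m i) (fun i => measurable_id.sub_const (m i))
  have hXint : ∀ i, Integrable (X i) μ := fun i =>
    integrable_bdd μ (hmeas i).aestronglyMeasurable (fun ω => bdd_abs (hab i ω))
  have hYab : ∀ i ω, Y i ω ∈ Set.Icc (a i - m i) (b i - m i) := fun i ω =>
    ⟨by simp only [hY]; linarith [(hab i ω).1], by simp only [hY]; linarith [(hab i ω).2]⟩
  have hYmean : ∀ i, ∫ ω, Y i ω ∂μ = 0 := by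
    intro i
    simp only [hY]
    rw [integral_sub (hXint i) (integrable_const _), integral_const]
    simp [hm]
  set t : ℝ := 4 * ε / D with ht_def
  have ht : 0 ≤ t := by positivity
  have hmgf_each : ∀ i, mgf (Y i) μ t ≤ Real.exp (t ^ 2 * (b i - a i) ^ 2 / 8) := by
    intro i
    have := hoeff_mgf μ (hYmeas i) (hYab i) (hYmean i) t
    convert this using 3
    ring
  have hmgf_sum : mgf (∑ i, Y i) μ t ≤ Real.exp (t ^ 2 * D / 8) := by
    rw [hYindep.mgf_sum hYmeas Finset.univ]
    calc ∏ i, mgf (Y i) μ t ≤ ∏ i, Real.exp (t ^ 2 * (b i - a i) ^ 2 / 8) :=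
          Finset.prod_le_prod (fun i _ => mgf_nonneg) (fun i _ => hmgf_each i)
      _ = Real.exp (∑ i, t ^ 2 * (b i - a i) ^ 2 / 8) := by rw [Real.exp_sum]
      _ ≤ Real.exp (t ^ 2 * D / 8) := by
          rw [Real.exp_le_exp]
          calc ∑ i, t ^ 2 * (b i - a i) ^ 2 / 8
              = t ^ 2 / 8 * ∑ i, (b i - a i) ^ 2 := by
                rw [Finset.mul_sum]; congr 1; ext i; ring
            _ ≤ t ^ 2 / 8 * D := by
                apply mul_le_mul_of_nonneg_left hsum (by positivity)
            _ = t ^ 2 * D / 8 := by ring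
  have h_int : Integrable (fun ω => Real.exp (t * (∑ i, Y i) ω)) μ := by
    apply hYindep.integrable_exp_mul_sum hYmeas
    intro i _
    apply integrable_bdd μ ((hYmeas i).const_mul t).exp.aestronglyMeasurable
      (M := Real.exp (|t| * max |a i - m i| |b i - m i|))
    intro ω
    rw [abs_of_nonneg (Real.exp_pos _).le, Real.exp_le_exp]
    calc t * Y i ω ≤ |t * Y i ω| := le_abs_self _
      _ = |t| * |Y i ω| := abs_mul _ _
      _ ≤ |t| * max |a i - m i| |b i - m i| :=
          mul_le_mul_of_nonneg_left (bdd_abs (hYab i ω)) (abs_nonneg t)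
  have hchern := measure_ge_le_exp_mul_mgf (μ := μ) (X := ∑ i, Y i) ε ht h_int
  have hset : {ω | ε ≤ ∑ i, (X i ω - m i)} = {ω | ε ≤ (∑ i, Y i) ω} := by
    ext ω
    simp [Finset.sum_apply, hY]
  rw [hset]
  calc (μ {ω | ε ≤ (∑ i, Y i) ω}).toReal
      ≤ Real.exp (-t * ε) * mgf (∑ i, Y i) μ t := hchern
    _ ≤ Real.exp (-t * ε) * Real.exp (t ^ 2 * D / 8) :=
        mul_le_mul_of_nonneg_left hmgf_sum (Real.exp_pos _).le
    _ = Real.exp (-t * ε + t ^ 2 * D / 8) := (Real.exp_add _ _).symm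
    _ = Real.exp (-(2 * ε ^ 2 / D)) := by
        congr 1
        rw [ht_def]
        field_simp
        ring

lemma hoeff_sum_abs {ι Ω : Type*} [Fintype ι] [MeasurableSpace Ω] (μ : Measure Ω)
    [IsProbabilityMeasure μ]
    {X : ι → Ω → ℝ} (hindep : iIndepFun X μ)
    (hmeas : ∀ i, Measurable (X i)) {a b : ι → ℝ}
    (hab : ∀ i ω, X i ω ∈ Set.Icc (a i) (b i))
    {D : ℝ} (hD : 0 < D) (hsum : ∑ i, (b i - a i) ^ 2 ≤ D)
    {ε : ℝ} (hε : 0 ≤ ε) :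
    (μ {ω | ε < |∑ i, (X i ω - ∫ ω', X i ω' ∂μ)|}).toReal
      ≤ 2 * Real.exp (-(2 * ε ^ 2 / D)) := by
  classical
  have hXint : ∀ i, Integrable (X i) μ := fun i =>
    integrable_bdd μ (hmeas i).aestronglyMeasurable (fun ω => bdd_abs (hab i ω))
  have h1 := hoeff_sum_ge μ hindep hmeas hab hD hsum hε
  have h2 : (μ {ω | ε ≤ ∑ i, ((-X i) ω - ∫ ω', (-X i) ω' ∂μ)}).toReal
      ≤ Real.exp (-(2 * ε ^ 2 / D)) := by
    apply hoeff_sum_ge μ (hindep.comp (fun _ x => -x) (fun _ => measurable_neg)) 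
      (fun i => (hmeas i).neg) (a := fun i => -(b i)) (b := fun i => -(a i))
      (fun i ω => ⟨neg_le_neg (hab i ω).2, neg_le_neg (hab i ω).1⟩) hD
      (by convert hsum using 2 with i; ring) hε
  have hneg : ∀ ω, ∑ i, ((-X i) ω - ∫ ω', (-X i) ω' ∂μ)
      = -∑ i, (X i ω - ∫ ω', X i ω' ∂μ) := by
    intro ω
    rw [← Finset.sum_neg_distrib]
    congr 1 with i
    simp only [Pi.neg_apply]
    rw [integral_neg]
    ring
  simp_rw [hneg] at h2
  set S : Ω → ℝ := fun ω => ∑ i, (X i ω - ∫ ω', X i ω' ∂μ) with hS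
  have hsub : {ω | ε < |S ω|} ⊆ {ω | ε ≤ S ω} ∪ {ω | ε ≤ -S ω} := by
    intro ω hω
    simp only [Set.mem_setOf_eq, Set.mem_union]
    rcases abs_cases (S ω) with ⟨he, _⟩ | ⟨he, _⟩
    · left; rw [← he]; exact le_of_lt hω
    · right; rw [← he]; exact le_of_lt hω
  calc (μ {ω | ε < |S ω|}).toReal
      ≤ (μ ({ω | ε ≤ S ω} ∪ {ω | ε ≤ -S ω})).toReal := by
        apply ENNReal.toReal_mono (measure_ne_top μ _) (measure_mono hsub)
    _ ≤ ((μ {ω | ε ≤ S ω}) + (μ {ω | ε ≤ -S ω})).toReal := by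
        apply ENNReal.toReal_mono
          (ENNReal.add_ne_top.2 ⟨measure_ne_top _ _, measure_ne_top _ _⟩)
          (measure_union_le _ _)
    _ = (μ {ω | ε ≤ S ω}).toReal + (μ {ω | ε ≤ -S ω}).toReal :=
        ENNReal.toReal_add (measure_ne_top _ _) (measure_ne_top _ _)
    _ ≤ 2 * Real.exp (-(2 * ε ^ 2 / D)) := by
        have := h1
        have := h2
        simp only [hS] at *
        linarith

end AuxHoeffding

section AuxVar


section
variable {K : Type*} [Fintype K] [Nonempty K]

lemma card_pos' : (0:ℝ) < (Fintype.card K : ℝ) := by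
  exact_mod_cast Fintype.card_pos

/-- bias-variance style decomposition -/
lemma sum_sq_dec (x : K → ℝ) (c : ℝ) :
    ∑ k : K, (x k - c) ^ 2 = (∑ k : K, (x k - (Fintype.card K : ℝ)⁻¹ * ∑ j : K, x j) ^ 2)
      + (Fintype.card K : ℝ) * ((Fintype.card K : ℝ)⁻¹ * (∑ j : K, x j) - c) ^ 2 := by
  have hκ : (0:ℝ) < (Fintype.card K : ℝ) := card_pos'
  set κ : ℝ := (Fintype.card K : ℝ) with hκdef
  set xb : ℝ := κ⁻¹ * ∑ j : K, x j with hxb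
  have hsum : ∑ j : K, x j = κ * xb := by
    rw [hxb, ← mul_assoc, mul_inv_cancel₀ hκ.ne', one_mul]
  have h0 : ∑ k : K, (x k - xb) = 0 := by
    rw [Finset.sum_sub_distrib, Finset.sum_const, hsum]
    simp [hκdef, card_univ, nsmul_eq_mul]
  calc ∑ k : K, (x k - c) ^ 2
      = ∑ k : K, ((x k - xb) ^ 2 + 2 * (xb - c) * (x k - xb) + (xb - c) ^ 2) := by
        apply Finset.sum_congr rfl; intro k _; ring
    _ = (∑ k : K, (x k - xb) ^ 2) + 2 * (xb - c) * (∑ k : K, (x k - xb))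
        + κ * (xb - c) ^ 2 := by
        rw [Finset.sum_add_distrib, Finset.sum_add_distrib, ← Finset.mul_sum,
          Finset.sum_const, card_univ, nsmul_eq_mul]
    _ = _ := by rw [h0]; ring

lemma varK_le_quarter {y : K → ℝ} (hy : ∀ k, y k ∈ Set.Icc (0:ℝ) 1) :
    varK y ≤ 1 / 4 := by
  have hκ : (0:ℝ) < (Fintype.card K : ℝ) := card_pos'
  have hdec := sum_sq_dec y 0
  rw [varK]
  set κ : ℝ := (Fintype.card K : ℝ) with hκdef
  set yb : ℝ := κ⁻¹ * ∑ j : K, y j with hyb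
  have hsq : ∑ k : K, (y k - 0) ^ 2 ≤ ∑ j : K, y j := by
    apply Finset.sum_le_sum
    intro k _
    have := (hy k).1; have := (hy k).2
    nlinarith
  have hyb0 : 0 ≤ yb := by
    rw [hyb]
    apply mul_nonneg (by positivity)
    exact Finset.sum_nonneg fun k _ => (hy k).1
  have hyb1 : yb ≤ 1 := by
    rw [hyb, inv_mul_le_iff₀ hκ, mul_one]
    calc ∑ j : K, y j ≤ ∑ _j : K, (1:ℝ) := Finset.sum_le_sum fun k _ => (hy k).2
      _ = κ := by simp [hκdef, card_univ]
  have hvar : κ⁻¹ * ∑ k : K, (y k - yb) ^ 2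
      = κ⁻¹ * (∑ k : K, (y k - 0) ^ 2) - yb ^ 2 := by
    have h2 : ∑ k : K, (y k - yb) ^ 2 = ∑ k : K, (y k - 0) ^ 2 - κ * (yb - 0) ^ 2 := by
      rw [hdec]; ring
    rw [h2, mul_sub, ← mul_assoc, inv_mul_cancel₀ hκ.ne', one_mul]
    ring
  rw [hvar]
  have h1 : κ⁻¹ * (∑ k : K, (y k - 0) ^ 2) ≤ yb := by
    rw [hyb]
    exact mul_le_mul_of_nonneg_left hsq (by positivity)
  nlinarith [sq_nonneg (yb - 1/2)]

lemma mean_abs_dev_le_half {y : K → ℝ} (hy : ∀ k, y k ∈ Set.Icc (0:ℝ) 1) :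
    (Fintype.card K : ℝ)⁻¹ * ∑ k : K, |y k - (Fintype.card K : ℝ)⁻¹ * ∑ j : K, y j| ≤ 1/2 := by
  have hκ : (0:ℝ) < (Fintype.card K : ℝ) := card_pos'
  have hq := varK_le_quarter hy
  rw [varK] at hq
  set κ : ℝ := (Fintype.card K : ℝ) with hκdef
  set yb : ℝ := κ⁻¹ * ∑ j : K, y j with hyb
  set A : ℝ := κ⁻¹ * ∑ k : K, |y k - yb| with hA
  have hA0 : 0 ≤ A := by
    apply mul_nonneg (by positivity)
    exact Finset.sum_nonneg fun k _ => abs_nonneg _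
  have hCS : (∑ k : K, |y k - yb|) ^ 2 ≤ κ * ∑ k : K, (y k - yb) ^ 2 := by
    have := sq_sum_le_card_mul_sum_sq (s := Finset.univ) (f := fun k => |y k - yb|)
    simp only [sq_abs, card_univ] at this
    exact_mod_cast this
  have hA2 : A ^ 2 ≤ κ⁻¹ * ∑ k : K, (y k - yb) ^ 2 := by
    rw [hA, mul_pow]
    have hstep : κ⁻¹ ^ 2 * (∑ k : K, |y k - yb|) ^ 2
        ≤ κ⁻¹ ^ 2 * (κ * ∑ k : K, (y k - yb) ^ 2) :=
      mul_le_mul_of_nonneg_left hCS (by positivity)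
    have hc : κ⁻¹ ^ 2 * κ = κ⁻¹ := by
      rw [sq, mul_assoc, inv_mul_cancel₀ hκ.ne', mul_one]
    calc κ⁻¹ ^ 2 * (∑ k : K, |y k - yb|) ^ 2
        ≤ κ⁻¹ ^ 2 * (κ * ∑ k : K, (y k - yb) ^ 2) := hstep
      _ = κ⁻¹ * ∑ k : K, (y k - yb) ^ 2 := by rw [← mul_assoc, hc]
  nlinarith

lemma varK_sub_le {x y : K → ℝ} (hy : ∀ k, y k ∈ Set.Icc (0:ℝ) 1)
    {d : ℝ} (hd0 : 0 ≤ d) (hd1 : d ≤ 1) (hxy : ∀ k, |x k - y k| ≤ d) :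
    varK x - varK y ≤ 2 * d := by
  have hκ : (0:ℝ) < (Fintype.card K : ℝ) := card_pos'
  have hmad := mean_abs_dev_le_half hy
  have hdec := sum_sq_dec x ((Fintype.card K : ℝ)⁻¹ * ∑ j : K, y j)
  rw [varK, varK]
  set κ : ℝ := (Fintype.card K : ℝ) with hκdef
  set yb : ℝ := κ⁻¹ * ∑ j : K, y j with hyb
  set xb : ℝ := κ⁻¹ * ∑ j : K, x j with hxb
  -- varK x ≤ κ⁻¹ ∑ (x k - yb)^2
  have h1 : κ⁻¹ * ∑ k : K, (x k - xb) ^ 2 ≤ κ⁻¹ * ∑ k : K, (x k - yb) ^ 2 := by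
    have h0 : 0 ≤ κ * (xb - yb) ^ 2 := by positivity
    have : ∑ k : K, (x k - xb) ^ 2 ≤ ∑ k : K, (x k - yb) ^ 2 := by
      rw [hdec]; linarith
    exact mul_le_mul_of_nonneg_left this (by positivity)
  have h2 : κ⁻¹ * ∑ k : K, (x k - yb) ^ 2
      ≤ κ⁻¹ * ∑ k : K, (y k - yb) ^ 2 + 2 * d * (κ⁻¹ * ∑ k : K, |y k - yb|) + d ^ 2 := by
    have hpt : ∀ k : K, (x k - yb) ^ 2 ≤ (y k - yb) ^ 2 + 2 * d * |y k - yb| + d ^ 2 := by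
      intro k
      have he : |x k - y k| ≤ d := hxy k
      have h4 : (y k - yb) * (x k - y k) ≤ |y k - yb| * d := by
        calc (y k - yb) * (x k - y k) ≤ |(y k - yb) * (x k - y k)| := le_abs_self _
          _ = |y k - yb| * |x k - y k| := abs_mul _ _
          _ ≤ |y k - yb| * d := mul_le_mul_of_nonneg_left he (abs_nonneg _)
      have h5 : (x k - y k) ^ 2 ≤ d ^ 2 := by
        rw [← sq_abs]
        exact pow_le_pow_left₀ (abs_nonneg _) he 2
      nlinarith
    have hcd : κ⁻¹ * (κ * d ^ 2) = d ^ 2 := by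
      rw [← mul_assoc, inv_mul_cancel₀ hκ.ne', one_mul]
    calc κ⁻¹ * ∑ k : K, (x k - yb) ^ 2
        ≤ κ⁻¹ * ∑ k : K, ((y k - yb) ^ 2 + 2 * d * |y k - yb| + d ^ 2) :=
          mul_le_mul_of_nonneg_left (Finset.sum_le_sum fun k _ => hpt k) (by positivity)
      _ = κ⁻¹ * ((∑ k : K, (y k - yb) ^ 2) + 2 * d * (∑ k : K, |y k - yb|) + κ * d ^ 2) := by
          rw [Finset.sum_add_distrib, Finset.sum_add_distrib, ← Finset.mul_sum,
            Finset.sum_const, card_univ, nsmul_eq_mul]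
      _ = κ⁻¹ * ∑ k : K, (y k - yb) ^ 2 + 2 * d * (κ⁻¹ * ∑ k : K, |y k - yb|) + d ^ 2 := by
          rw [mul_add, mul_add, hcd]; ring
  nlinarith

lemma varK_lip {x y : K → ℝ} (hx : ∀ k, x k ∈ Set.Icc (0:ℝ) 1)
    (hy : ∀ k, y k ∈ Set.Icc (0:ℝ) 1)
    {d : ℝ} (hd0 : 0 ≤ d) (hd1 : d ≤ 1) (hxy : ∀ k, |x k - y k| ≤ d) :
    |varK x - varK y| ≤ 2 * d := by
  rw [abs_le]
  constructor
  · have := varK_sub_le hx hd0 hd1 (fun k => by rw [abs_sub_comm]; exact hxy k)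
    linarith
  · exact varK_sub_le hy hd0 hd1 hxy

end

end AuxVar

set_option maxHeartbeats 1000000 in
/-- **Finite-sample concentration of the plug-in AAI estimator** (cost term omitted).
With per-seed sensitivity controlled by `w_k/|F_k| ≤ C/|T|` and `L`-Lipschitz `ψ_t`,
for `n` independent `[0,1]`-valued seeds per task the empirical score
`Φ̂ = linear part − λ·V(m̂)` concentrates around the population score
`Φ = E[linear part] − λ·V(m)`: with probability at least `1 − δ`,
`|Φ̂ − Φ| ≤ C·L·√(log(4/δ)/(2n|T|)) + 2λ·√(log(4|K|/δ)/(2n))`. -/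
theorem stmt_17 {T K : Type*} [Fintype T] [Nonempty T] [Fintype K] [Nonempty K]
    [DecidableEq K] {Ω : Type*} [MeasurableSpace Ω]
    (μ : Measure Ω) [IsProbabilityMeasure μ]
    (fam : T → K) (hfam : Function.Surjective fam)
    (C : ℝ) (hC : 0 < C) (w : K → ℝ) (hw : ∀ k, 0 ≤ w k)
    (hwC : ∀ k, w k / ((famSet fam k).card : ℝ) ≤ C / (Fintype.card T : ℝ))
    (L : ℝ) (hL : 0 < L) (ψ : T → ℝ → ℝ)
    (hψ : ∀ t, ∀ a ∈ Set.Icc (0:ℝ) 1, ∀ b ∈ Set.Icc (0:ℝ) 1,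
      |ψ t a - ψ t b| ≤ L * |a - b|)
    (lam : ℝ) (hlam : 0 ≤ lam)
    (n : ℕ) (hn : 1 ≤ n)
    (q : T × Fin n → Ω → ℝ)
    (hqmeas : ∀ ti, Measurable (q ti))
    (hq01 : ∀ ti ω, q ti ω ∈ Set.Icc (0:ℝ) 1)
    (hindep : iIndepFun q μ) :
    ∀ δ : ℝ, δ ∈ Set.Ioo (0:ℝ) 1 →
      1 - δ ≤
        (μ {ω |
          |(linEst fam w ψ n q ω - lam * varK (fun k => famEst fam n q k ω))
            - ((∫ ω', linEst fam w ψ n q ω' ∂μ)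
                - lam * varK (fun k => ∫ ω', famEst fam n q k ω' ∂μ))|
          ≤ C * L * Real.sqrt (Real.log (4 / δ) / (2 * n * (Fintype.card T : ℝ)))
            + 2 * lam * Real.sqrt (Real.log (4 * (Fintype.card K : ℝ) / δ) / (2 * n))
          }).toReal := by
  intro δ hδ
  obtain ⟨hδ0, hδ1⟩ := hδ
  classical
  have hκT0 : (0:ℝ) < (Fintype.card T : ℝ) := by exact_mod_cast Fintype.card_pos
  have hκK0 : (0:ℝ) < (Fintype.card K : ℝ) := by exact_mod_cast Fintype.card_pos
  have hκK1 : (1:ℝ) ≤ (Fintype.card K : ℝ) := by exact_mod_cast Fintype.card_pos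
  have hn0 : (0:ℝ) < (n:ℝ) := by exact_mod_cast hn
  set εA : ℝ := C * L * Real.sqrt (Real.log (4 / δ) / (2 * n * (Fintype.card T : ℝ)))
    with hεAdef
  set εB : ℝ := Real.sqrt (Real.log (4 * (Fintype.card K : ℝ) / δ) / (2 * n)) with hεBdef
  have hlogA : 0 ≤ Real.log (4 / δ) := Real.log_nonneg (by rw [le_div_iff₀ hδ0]; linarith)
  have hlogB : 0 ≤ Real.log (4 * (Fintype.card K : ℝ) / δ) :=
    Real.log_nonneg (by rw [le_div_iff₀ hδ0]; nlinarith)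
  have hεA0 : 0 ≤ εA := by
    rw [hεAdef]; exact mul_nonneg (mul_nonneg hC.le hL.le) (Real.sqrt_nonneg _)
  have hεB0 : 0 ≤ εB := Real.sqrt_nonneg _
  -- family cardinalities
  have hcardR : ∀ k : K, (0:ℝ) < ((famSet fam k).card : ℝ) := by
    intro k
    obtain ⟨t, ht⟩ := hfam k
    have : t ∈ famSet fam k := by simp [famSet, ht]
    exact_mod_cast Finset.card_pos.2 ⟨t, this⟩
  have hcard1 : ∀ k : K, (1:ℝ) ≤ ((famSet fam k).card : ℝ) := by
    intro k
    have := hcardR k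
    exact_mod_cast this
  -- clamped ψ
  set g : T → ℝ → ℝ := fun t x => ψ t (max 0 (min x 1)) with hgdef
  have hclamp_mem : ∀ x : ℝ, max 0 (min x 1) ∈ Set.Icc (0:ℝ) 1 := fun x =>
    ⟨le_max_left _ _, max_le zero_le_one (min_le_right _ _)⟩
  have hg_eq : ∀ t (x : ℝ), x ∈ Set.Icc (0:ℝ) 1 → g t x = ψ t x := by
    intro t x hx
    rw [hgdef]
    simp only
    rw [min_eq_left hx.2, max_eq_right hx.1]
  have hgcont : ∀ t, Continuous (g t) := by
    intro t
    have hψc : ContinuousOn (ψ t) (Set.Icc 0 1) := by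
      apply LipschitzOnWith.continuousOn (K := Real.toNNReal L)
      apply LipschitzOnWith.of_dist_le'
      intro x hx y hy
      rw [Real.dist_eq, Real.dist_eq]
      exact hψ t x hx y hy
    have hcl : Continuous (fun x : ℝ => max 0 (min x 1)) :=
      continuous_const.max (continuous_id.min continuous_const)
    simpa [hgdef, Function.comp_def] using hψc.comp_continuous hcl hclamp_mem
  -- coefficients
  set av : T → ℝ := fun t => w (fam t) / ((famSet fam (fam t)).card : ℝ) * (n:ℝ)⁻¹ with havdef
  have hav0 : ∀ t, 0 ≤ av t := fun t =>
    mul_nonneg (div_nonneg (hw _) (hcardR _).le) (by positivity)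
  have havle : ∀ t, av t ≤ C / (Fintype.card T : ℝ) * (n:ℝ)⁻¹ := fun t =>
    mul_le_mul_of_nonneg_right (hwC (fam t)) (by positivity)
  -- sup of ψ on [0,1]
  set M : T → ℝ := fun t => sSup (ψ t '' Set.Icc 0 1) with hMdef
  have him : ∀ t, (ψ t '' Set.Icc 0 1).Nonempty := fun t =>
    ⟨ψ t 0, 0, ⟨le_refl _, zero_le_one⟩, rfl⟩
  have hbdd : ∀ t, BddAbove (ψ t '' Set.Icc 0 1) := by
    intro t
    refine ⟨ψ t 0 + L, ?_⟩
    rintro y ⟨x, hx, rfl⟩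
    have h1 := hψ t x hx 0 ⟨le_refl 0, zero_le_one⟩
    have habs : |x - 0| ≤ 1 := by rw [sub_zero, abs_of_nonneg hx.1]; exact hx.2
    have h2 := abs_le.1 h1
    nlinarith [hL.le]
  have hψle : ∀ t, ∀ x ∈ Set.Icc (0:ℝ) 1, ψ t x ≤ M t := fun t x hx =>
    le_csSup (hbdd t) ⟨x, hx, rfl⟩
  have hψge : ∀ t, ∀ x ∈ Set.Icc (0:ℝ) 1, M t - L ≤ ψ t x := by
    intro t x hx
    rw [sub_le_iff_le_add]
    apply csSup_le (him t)
    rintro y ⟨z, hz, rfl⟩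
    have h1 := hψ t z hz x hx
    have habs : |z - x| ≤ 1 := by
      rw [abs_le]
      constructor
      · linarith [hz.1, hx.2]
      · linarith [hz.2, hx.1]
    have h2 := abs_le.1 h1
    nlinarith [hL.le]
  -- linear-part variables
  set X : T × Fin n → Ω → ℝ := fun ti ω => av ti.1 * g ti.1 (q ti ω) with hXdef
  have hXmeas : ∀ ti, Measurable (X ti) := fun ti =>
    ((hgcont ti.1).measurable.comp (hqmeas ti)).const_mul _
  have hXab : ∀ ti (ω : Ω), X ti ω ∈ Set.Icc (av ti.1 * (M ti.1 - L)) (av ti.1 * M ti.1) := by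
    intro ti ω
    have hq := hq01 ti ω
    rw [hXdef]
    simp only
    rw [hg_eq _ _ hq]
    exact ⟨mul_le_mul_of_nonneg_left (hψge _ _ hq) (hav0 _),
      mul_le_mul_of_nonneg_left (hψle _ _ hq) (hav0 _)⟩
  have hXindep : iIndepFun X μ :=
    hindep.comp (fun ti x => av ti.1 * g ti.1 x)
      (fun ti => ((hgcont ti.1).measurable).const_mul _)
  have hXint : ∀ ti, Integrable (X ti) μ := fun ti =>
    integrable_bdd μ (hXmeas ti).aestronglyMeasurable (fun ω => bdd_abs (hXab ti ω))
  set DA : ℝ := C ^ 2 * L ^ 2 / ((n:ℝ) * (Fintype.card T : ℝ)) with hDAdef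
  have hDA0 : 0 < DA := by rw [hDAdef]; positivity
  have hDAsum : ∑ ti : T × Fin n,
      (av ti.1 * M ti.1 - av ti.1 * (M ti.1 - L)) ^ 2 ≤ DA := by
    have heach : ∀ ti : T × Fin n, (av ti.1 * M ti.1 - av ti.1 * (M ti.1 - L)) ^ 2
        ≤ (C * L / ((n:ℝ) * (Fintype.card T : ℝ))) ^ 2 := by
      intro ti
      have h1 : av ti.1 * M ti.1 - av ti.1 * (M ti.1 - L) = av ti.1 * L := by ring
      rw [h1]
      apply pow_le_pow_left₀ (mul_nonneg (hav0 _) hL.le)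
      calc av ti.1 * L ≤ (C / (Fintype.card T : ℝ) * (n:ℝ)⁻¹) * L :=
            mul_le_mul_of_nonneg_right (havle _) hL.le
        _ = C * L / ((n:ℝ) * (Fintype.card T : ℝ)) := by
            field_simp
    calc ∑ ti : T × Fin n, (av ti.1 * M ti.1 - av ti.1 * (M ti.1 - L)) ^ 2
        ≤ ∑ _ti : T × Fin n, (C * L / ((n:ℝ) * (Fintype.card T : ℝ))) ^ 2 :=
          Finset.sum_le_sum fun ti _ => heach ti
      _ = ((Fintype.card T : ℝ) * (n : ℝ)) * (C * L / ((n:ℝ) * (Fintype.card T : ℝ))) ^ 2 := by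
          rw [Finset.sum_const, Finset.card_univ, Fintype.card_prod, Fintype.card_fin,
            nsmul_eq_mul, Nat.cast_mul]
      _ = DA := by
          rw [hDAdef]
          field_simp
  have hAraw := hoeff_sum_abs μ hXindep hXmeas hXab hDA0 hDAsum hεA0
  -- identify the sum with linEst
  have hlin : ∀ ω, linEst fam w ψ n q ω = ∑ ti : T × Fin n, X ti ω := by
    intro ω
    calc linEst fam w ψ n q ω
        = ∑ k : K, ∑ t ∈ famSet fam k,
            av t * ∑ i : Fin n, g t (q (t, i) ω) := by
          rw [linEst]
          apply Finset.sum_congr rfl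
          intro k _
          rw [Finset.mul_sum]
          apply Finset.sum_congr rfl
          intro t ht
          have hfk : fam t = k := by
            simp only [famSet, Finset.mem_filter] at ht
            exact ht.2
          have hψg : ∑ i : Fin n, ψ t (q (t, i) ω) = ∑ i : Fin n, g t (q (t, i) ω) :=
            Finset.sum_congr rfl fun i _ => (hg_eq t _ (hq01 (t, i) ω)).symm
          rw [← hψg, havdef]
          simp only [hfk]
          ring
      _ = ∑ t : T, av t * ∑ i : Fin n, g t (q (t, i) ω) := by
          have := Finset.sum_fiberwise (Finset.univ : Finset T) fam
            (fun t => av t * ∑ i : Fin n, g t (q (t, i) ω))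
          simpa [famSet] using this
      _ = ∑ ti : T × Fin n, X ti ω := by
          rw [Fintype.sum_prod_type]
          apply Finset.sum_congr rfl
          intro t _
          rw [Finset.mul_sum]
  have hlinint : ∫ ω', linEst fam w ψ n q ω' ∂μ = ∑ ti : T × Fin n, ∫ ω', X ti ω' ∂μ := by
    simp_rw [hlin]
    exact integral_finset_sum _ fun ti _ => hXint ti
  set SA : Set Ω :=
    {ω | εA < |linEst fam w ψ n q ω - ∫ ω', linEst fam w ψ n q ω' ∂μ|} with hSAdef
  have hAbound : (μ SA).toReal ≤ δ / 2 := by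
    have hset : {ω | εA < |∑ ti : T × Fin n, (X ti ω - ∫ ω', X ti ω' ∂μ)|} = SA := by
      rw [hSAdef]
      ext ω
      rw [Set.mem_setOf_eq, Set.mem_setOf_eq, Finset.sum_sub_distrib, ← hlin ω, ← hlinint]
    rw [← hset]
    refine hAraw.trans ?_
    have harg : -(2 * εA ^ 2 / DA) = -Real.log (4 / δ) := by
      rw [hεAdef, hDAdef, mul_pow, mul_pow,
        Real.sq_sqrt (div_nonneg hlogA (by positivity))]
      field_simp
    rw [harg, Real.exp_neg, Real.exp_log (by positivity), inv_div]
    linarith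
  -- family-mean variables
  set rk : K → ℝ := fun k => ((n:ℝ) * ((famSet fam k).card : ℝ))⁻¹ with hrkdef
  have hrk0 : ∀ k, 0 ≤ rk k := fun k => by rw [hrkdef]; positivity
  set Zc : K → T × Fin n → ℝ := fun k ti => if fam ti.1 = k then rk k else 0 with hZcdef
  have hZc0 : ∀ k ti, 0 ≤ Zc k ti := by
    intro k ti
    rw [hZcdef]
    dsimp only
    split
    · exact hrk0 k
    · exact le_refl 0
  set Z : K → T × Fin n → Ω → ℝ := fun k ti ω => Zc k ti * q ti ω with hZdef
  have hZmeas : ∀ k ti, Measurable (Z k ti) := fun k ti => (hqmeas ti).const_mul _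
  have hZab : ∀ k ti (ω : Ω), Z k ti ω ∈ Set.Icc 0 (Zc k ti) := by
    intro k ti ω
    constructor
    · exact mul_nonneg (hZc0 k ti) (hq01 ti ω).1
    · calc Zc k ti * q ti ω ≤ Zc k ti * 1 :=
          mul_le_mul_of_nonneg_left (hq01 ti ω).2 (hZc0 k ti)
        _ = Zc k ti := mul_one _
  have hZindep : ∀ k, iIndepFun (Z k) μ := fun k =>
    hindep.comp (fun ti x => Zc k ti * x) (fun ti => measurable_id.const_mul _)
  have hZint : ∀ k ti, Integrable (Z k ti) μ := fun k ti =>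
    integrable_bdd μ (hZmeas k ti).aestronglyMeasurable (fun ω => bdd_abs (hZab k ti ω))
  -- sum of Zc over all indices equals 1
  have hZcsum : ∀ k, ∑ ti : T × Fin n, Zc k ti = 1 := by
    intro k
    rw [Fintype.sum_prod_type]
    have hinner : ∀ t : T, ∑ i : Fin n, Zc k (t, i) = (n:ℝ) * (if fam t = k then rk k else 0) := by
      intro t
      rw [hZcdef]
      dsimp only
      by_cases hft : fam t = k <;> simp [hft]
    rw [Finset.sum_congr rfl fun t _ => hinner t, ← Finset.mul_sum,
      ← Finset.sum_filter (fun t => fam t = k) (fun _ => rk k)]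
    have : ∑ _t ∈ famSet fam k, rk k = ((famSet fam k).card : ℝ) * rk k := by
      rw [Finset.sum_const, nsmul_eq_mul]
    rw [show Finset.filter (fun t => fam t = k) Finset.univ = famSet fam k from rfl, this,
      hrkdef]
    rw [← mul_assoc, mul_inv_cancel₀ (mul_pos hn0 (hcardR k)).ne']
  have hZsqsum : ∀ k, ∑ ti : T × Fin n, (Zc k ti - 0) ^ 2 ≤ (n:ℝ)⁻¹ := by
    intro k
    simp only [sub_zero]
    have hsq : ∀ ti : T × Fin n, (Zc k ti) ^ 2 = Zc k ti * rk k := by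
      intro ti
      rw [hZcdef]
      dsimp only
      split
      · rw [sq]
      · rw [zero_mul, zero_pow] <;> norm_num
    rw [Finset.sum_congr rfl fun ti _ => hsq ti, ← Finset.sum_mul, hZcsum k, one_mul, hrkdef]
    rw [inv_le_inv₀ (mul_pos hn0 (hcardR k)) hn0]
    exact le_mul_of_one_le_right hn0.le (hcard1 k)
  have hfamdec : ∀ k (ω : Ω), famEst fam n q k ω = ∑ ti : T × Fin n, Z k ti ω := by
    intro k ω
    rw [famEst, Fintype.sum_prod_type]
    rw [Finset.mul_sum]
    rw [show (famSet fam k) = Finset.filter (fun t => fam t = k) Finset.univ from rfl,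
      Finset.sum_filter]
    apply Finset.sum_congr rfl
    intro t _
    rw [hZdef]
    dsimp only
    rw [hZcdef]
    dsimp only
    split
    · rw [← Finset.mul_sum, hrkdef]
      rfl
    · simp
  have hfamint : ∀ k, ∫ ω', famEst fam n q k ω' ∂μ = ∑ ti : T × Fin n, ∫ ω', Z k ti ω' ∂μ := by
    intro k
    simp_rw [hfamdec k]
    exact integral_finset_sum _ fun ti _ => hZint k ti
  set SB : K → Set Ω := fun k =>
    {ω | εB < |famEst fam n q k ω - ∫ ω', famEst fam n q k ω' ∂μ|} with hSBdef
  have hDB0 : (0:ℝ) < (n:ℝ)⁻¹ := by positivity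
  have hBbound : ∀ k, (μ (SB k)).toReal ≤ δ / (2 * (Fintype.card K : ℝ)) := by
    intro k
    have hraw := hoeff_sum_abs μ (hZindep k) (hZmeas k) (hZab k) hDB0 (hZsqsum k) hεB0
    have hset : {ω | εB < |∑ ti : T × Fin n, (Z k ti ω - ∫ ω', Z k ti ω' ∂μ)|} = SB k := by
      rw [hSBdef]
      ext ω
      rw [Set.mem_setOf_eq, Set.mem_setOf_eq, Finset.sum_sub_distrib, ← hfamdec k ω,
        ← hfamint k]
    rw [← hset]
    refine hraw.trans ?_
    have harg : -(2 * εB ^ 2 / (n:ℝ)⁻¹) = -Real.log (4 * (Fintype.card K : ℝ) / δ) := by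
      rw [hεBdef, Real.sq_sqrt (div_nonneg hlogB (by positivity))]
      field_simp
    rw [harg, Real.exp_neg, Real.exp_log (by positivity), inv_div]
    have heq : 2 * (δ / (4 * (Fintype.card K : ℝ))) = δ / (2 * (Fintype.card K : ℝ)) := by
      field_simp
      ring
    linarith
  -- pointwise bounds on famEst and its mean
  have hfammem : ∀ k (ω : Ω), famEst fam n q k ω ∈ Set.Icc (0:ℝ) 1 := by
    intro k ω
    rw [hfamdec k ω]
    constructor
    · exact Finset.sum_nonneg fun ti _ => (hZab k ti ω).1
    · calc ∑ ti : T × Fin n, Z k ti ω ≤ ∑ ti : T × Fin n, Zc k ti :=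
          Finset.sum_le_sum fun ti _ => (hZab k ti ω).2
        _ = 1 := hZcsum k
  have hfamIntg : ∀ k, Integrable (famEst fam n q k) μ := by
    intro k
    have heq : famEst fam n q k = fun ω => ∑ ti : T × Fin n, Z k ti ω := funext (hfamdec k)
    rw [heq]
    exact integrable_finset_sum _ fun ti _ => hZint k ti
  have hmkmem : ∀ k, (∫ ω', famEst fam n q k ω' ∂μ) ∈ Set.Icc (0:ℝ) 1 := by
    intro k
    constructor
    · exact integral_nonneg fun ω => (hfammem k ω).1
    · calc ∫ ω', famEst fam n q k ω' ∂μ ≤ ∫ _ω', (1:ℝ) ∂μ :=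
          integral_mono (hfamIntg k) (integrable_const 1) fun ω => (hfammem k ω).2
        _ = 1 := by simp
  -- union bound
  set G : Set Ω := SA ∪ ⋃ k : K, SB k with hGdef
  have hμG : (μ G).toReal ≤ δ := by
    have h1 : μ G ≤ μ SA + μ (⋃ k : K, SB k) := measure_union_le _ _
    have h2 : μ (⋃ k : K, SB k) ≤ ∑ k : K, μ (SB k) := measure_iUnion_fintype_le _ _
    have hne1 : μ SA + μ (⋃ k : K, SB k) ≠ ⊤ :=
      ENNReal.add_ne_top.2 ⟨measure_ne_top _ _, measure_ne_top _ _⟩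
    have hsumne : (∑ k : K, μ (SB k)) ≠ ⊤ :=
      (ENNReal.sum_lt_top.2 fun k _ => measure_lt_top μ _).ne
    calc (μ G).toReal ≤ (μ SA + μ (⋃ k : K, SB k)).toReal := ENNReal.toReal_mono hne1 h1
      _ = (μ SA).toReal + (μ (⋃ k : K, SB k)).toReal :=
          ENNReal.toReal_add (measure_ne_top _ _) (measure_ne_top _ _)
      _ ≤ δ / 2 + (∑ k : K, μ (SB k)).toReal :=
          add_le_add hAbound (ENNReal.toReal_mono hsumne h2)
      _ = δ / 2 + ∑ k : K, (μ (SB k)).toReal := by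
          rw [ENNReal.toReal_sum fun k _ => measure_ne_top _ _]
      _ ≤ δ / 2 + ∑ _k : K, δ / (2 * (Fintype.card K : ℝ)) :=
          add_le_add le_rfl (Finset.sum_le_sum fun k _ => hBbound k)
      _ = δ := by
          rw [Finset.sum_const, Finset.card_univ, nsmul_eq_mul]
          field_simp
          ring
  -- good event is contained in the target event
  set Starget : Set Ω :=
    {ω | |(linEst fam w ψ n q ω - lam * varK (fun k => famEst fam n q k ω))
            - ((∫ ω', linEst fam w ψ n q ω' ∂μ)
                - lam * varK (fun k => ∫ ω', famEst fam n q k ω' ∂μ))| ≤ εA + 2 * lam * εB}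
    with hStdef
  have hsub : Gᶜ ⊆ Starget := by
    intro ω hω
    rw [hGdef] at hω
    simp only [Set.mem_compl_iff, Set.mem_union, Set.mem_iUnion, not_or, not_exists,
      not_lt] at hω
    obtain ⟨hA, hB⟩ := hω
    rw [hSAdef, Set.mem_setOf_eq, not_lt] at hA
    have hBk : ∀ k, |famEst fam n q k ω - ∫ ω', famEst fam n q k ω' ∂μ| ≤ εB := by
      intro k
      have := hB k
      rw [hSBdef] at this
      simpa [Set.mem_setOf_eq, not_lt] using this
    rw [hStdef, Set.mem_setOf_eq]
    set e : ℝ := linEst fam w ψ n q ω - ∫ ω', linEst fam w ψ n q ω' ∂μ with hedef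
    set f : ℝ := varK (fun k => famEst fam n q k ω)
      - varK (fun k => ∫ ω', famEst fam n q k ω' ∂μ) with hfdef
    have hsplit : (linEst fam w ψ n q ω - lam * varK (fun k => famEst fam n q k ω))
        - ((∫ ω', linEst fam w ψ n q ω' ∂μ)
            - lam * varK (fun k => ∫ ω', famEst fam n q k ω' ∂μ)) = e - lam * f := by
      rw [hedef, hfdef]; ring
    rw [hsplit]
    have hd : ∀ k, |famEst fam n q k ω - ∫ ω', famEst fam n q k ω' ∂μ| ≤ min εB 1 := by
      intro k
      refine le_min (hBk k) ?_
      have h1 := hfammem k ω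
      have h2 := hmkmem k
      rw [abs_le]
      constructor
      · linarith [h1.1, h2.2]
      · linarith [h1.2, h2.1]
    have hflip : |f| ≤ 2 * min εB 1 := by
      rw [hfdef]
      exact varK_lip (fun k => hfammem k ω) (fun k => hmkmem k)
        (le_min hεB0 zero_le_one) (min_le_right _ _) hd
    calc |e - lam * f| ≤ |e| + |lam * f| := abs_sub _ _
      _ = |e| + lam * |f| := by rw [abs_mul, abs_of_nonneg hlam]
      _ ≤ εA + lam * (2 * min εB 1) :=
          add_le_add hA (mul_le_mul_of_nonneg_left hflip hlam)
      _ ≤ εA + 2 * lam * εB := by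
          have := min_le_left εB 1
          nlinarith [hlam]
  -- conclude
  have hcompl : (1:ℝ) - δ ≤ (μ Gᶜ).toReal := by
    have hle : μ Set.univ ≤ μ G + μ Gᶜ := by
      rw [← Set.union_compl_self G]
      exact measure_union_le _ _
    rw [measure_univ] at hle
    have h1 : (1:ℝ) ≤ (μ G).toReal + (μ Gᶜ).toReal := by
      have := ENNReal.toReal_mono
        (ENNReal.add_ne_top.2 ⟨measure_ne_top _ _, measure_ne_top _ _⟩) hle
      rwa [ENNReal.toReal_one, ENNReal.toReal_add (measure_ne_top _ _) (measure_ne_top _ _)]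
        at this
    linarith [hμG]
  refine hcompl.trans ?_
  exact ENNReal.toReal_mono (measure_ne_top _ _) (measure_mono hsub)
end
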